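/- An ultrafilter U over κ is (λ,μ;ω)-regular if and only if there is a family {X_β : β < λ} of U-large subsets of κ^ω such that every subfamily indexed by a set S ⊆ λ of cardinality μ has empty intersection. -/

import Mathlib

universe u

namespace UMeas

variable {A : Type u}

/-- The first `n` values of an infinite sequence, as a list. -/
def seg (s : ℕ → A) (n : ℕ) : List A := List.ofFn (fun i : Fin n => s i)

/-- `T` is a `U`-branching tree: a set of finite sequences closed under initial
segments, containing the empty sequence, whose branching sets are in `U`. -/
def IsUTree (U : Ultrafilter A) (T : Set (List A)) : Prop :=
  ([] ∈ T) ∧ (∀ σ ∈ T, ∀ τ : List A, τ <+: σ → τ ∈ T) ∧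
    ∀ σ ∈ T, {a : A | σ ++ [a] ∈ T} ∈ U

/-- The set of infinite branches through `T`. -/
def branches (T : Set (List A)) : Set (ℕ → A) := {s | ∀ n, seg s n ∈ T}

/-- Concatenation `σ⌢s` of a finite sequence with an infinite sequence. -/
def app (σ : List A) (s : ℕ → A) : ℕ → A :=
  fun n => if h : n < σ.length then σ.get ⟨n, h⟩ else s (n - σ.length)

/-- The section `X↾σ = {s | σ⌢s ∈ X}`. -/
def sect (X : Set (ℕ → A)) (σ : List A) : Set (ℕ → A) := {s | app σ s ∈ X}

def ULarge (U : Ultrafilter A) (X : Set (ℕ → A)) : Prop :=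
  ∃ T, IsUTree U T ∧ branches T ⊆ X

def USmall (U : Ultrafilter A) (X : Set (ℕ → A)) : Prop :=
  ∃ T, IsUTree U T ∧ branches T ∩ X = ∅

def UDetermined (U : Ultrafilter A) (X : Set (ℕ → A)) : Prop :=
  ULarge U X ∨ USmall U X

def UNull (U : Ultrafilter A) (X : Set (ℕ → A)) : Prop :=
  ∀ σ : List A, USmall U (sect X σ)

def UMeasurable (U : Ultrafilter A) (X : Set (ℕ → A)) : Prop :=
  ∀ σ : List A, UDetermined U (sect X σ)

end UMeas

namespace UMeas

/-- Sequences of ordinal length `β` with values in `A`. -/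
def OSeq (A : Type u) (β : Ordinal.{u}) := ∀ γ : Ordinal.{u}, γ < β → A

/-- Restriction `s↾γ` of an ordinal-length sequence. -/
def ores {A : Type u} {β : Ordinal.{u}} (s : OSeq A β) (γ : Ordinal.{u}) (h : γ ≤ β) :
    OSeq A γ := fun δ hδ => s δ (hδ.trans_le h)

/-- Extension `s⌢⟨a⟩` of an ordinal-length sequence by one element. -/
noncomputable def oext {A : Type u} {β : Ordinal.{u}} (s : OSeq A β) (a : A) : OSeq A (β + 1) :=
  fun δ hδ => if h : δ < β then s δ h else a

/-- A closed `U`-branching tree of height `α`: for each `β`, `mem β` is the set of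
sequences of length `β` in the tree (only levels `β < α` are relevant). -/
structure ClosedUBT (A : Type u) (U : Ultrafilter A) (α : Ordinal.{u}) where
  mem : ∀ β : Ordinal.{u}, Set (OSeq A β)
  isTree : ∀ β γ : Ordinal.{u}, β < α → (h : γ ≤ β) → ∀ s ∈ mem β, ores s γ h ∈ mem γ
  succ : ∀ β : Ordinal.{u}, β + 1 < α → ∀ s ∈ mem β, {a : A | oext s a ∈ mem (β + 1)} ∈ U
  nonsucc : ∀ β : Ordinal.{u}, β < α → (¬ ∃ γ : Ordinal.{u}, β = γ + 1) →
    ∀ s : OSeq A β, s ∈ mem β ↔ ∀ γ : Ordinal.{u}, (h : γ < β) → ores s γ h.le ∈ mem γ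

/-- `U` is `(l, m; α)`-regular: there is a family of `l` closed `U`-branching trees of
height `α + 1` such that no subfamily of size `m` has a common maximal element. -/
def LMARegular {A : Type u} (U : Ultrafilter A) (l m : Cardinal.{u}) (α : Ordinal.{u}) : Prop :=
  ∃ T : (Cardinal.ord l).ToType → ClosedUBT A U (α + 1),
    ∀ S : Set (Cardinal.ord l).ToType, Cardinal.mk ↥S = m →
      ¬ ∃ s : OSeq A α, ∀ β ∈ S, s ∈ (T β).mem α

end UMeas


namespace UMeas2

open Ordinal UMeas

variable {A : Type u} {U : Ultrafilter A}

noncomputable def toNat' (γ : Ordinal.{u}) (h : γ < Ordinal.omega0) : ℕ :=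
  Classical.choose (Ordinal.lt_omega0.1 h)

lemma toNat'_spec (γ : Ordinal.{u}) (h : γ < Ordinal.omega0) : γ = toNat' γ h :=
  Classical.choose_spec (Ordinal.lt_omega0.1 h)

lemma toNat'_natCast (n : ℕ) (h : ((n : ℕ) : Ordinal.{u}) < Ordinal.omega0) :
    toNat' (n : Ordinal.{u}) h = n := by
  have := toNat'_spec (n : Ordinal.{u}) h
  exact_mod_cast this.symm

/-- Finite-level ordinal sequence to list. -/
def olist {n : ℕ} (s : OSeq A ((n : ℕ) : Ordinal.{u})) : List A :=
  List.ofFn (fun i : Fin n => s i (by exact_mod_cast i.2))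

noncomputable def lseq (σ : List A) : OSeq A ((σ.length : ℕ) : Ordinal.{u}) :=
  fun γ hγ =>
    σ.get ⟨toNat' γ (hγ.trans (Ordinal.nat_lt_omega0 _)), by
      have := toNat'_spec γ (hγ.trans (Ordinal.nat_lt_omega0 _))
      rw [this] at hγ; exact_mod_cast hγ⟩

lemma lseq_natCast (σ : List A) (k : ℕ) (hγ : ((k : ℕ) : Ordinal.{u}) < (σ.length : Ordinal))
    (hk : k < σ.length) : lseq σ (k : Ordinal) hγ = σ.get ⟨k, hk⟩ := by
  have h : toNat' ((k : ℕ) : Ordinal.{u}) (hγ.trans (Ordinal.nat_lt_omega0 _)) = k :=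
    toNat'_natCast k _
  exact congrArg σ.get (Fin.ext h)

lemma memCongr {α : Ordinal.{u}} (T : ClosedUBT A U α)
    {β β' : Ordinal.{u}} (e : β = β') {s : OSeq A β} {s' : OSeq A β'}
    (hs : ∀ γ hγ hγ', s γ hγ = s' γ hγ') : s ∈ T.mem β ↔ s' ∈ T.mem β' := by
  subst e
  have : s = s' := funext fun γ => funext fun hγ => hs γ hγ hγ
  rw [this]

lemma omega0_lt_succ : Ordinal.omega0.{u} < Ordinal.omega0.{u} + 1 := by
  rw [Ordinal.add_one_eq_succ]; exact Order.lt_succ _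

lemma omega0_not_succ : ¬ ∃ γ : Ordinal.{u}, Ordinal.omega0.{u} = γ + 1 := by
  rintro ⟨γ, hγ⟩
  have h1 : γ < Ordinal.omega0.{u} := by
    rw [hγ, Ordinal.add_one_eq_succ]; exact Order.lt_succ _
  obtain ⟨n, rfl⟩ := Ordinal.lt_omega0.1 h1
  have : ((n + 1 : ℕ) : Ordinal.{u}) = Ordinal.omega0 := by
    rw [hγ, Nat.cast_add, Nat.cast_one]
  exact (Ordinal.nat_lt_omega0 (n + 1)).ne this

lemma natCast_lt_omega0_succ (n : ℕ) : ((n : ℕ) : Ordinal.{u}) < Ordinal.omega0 + 1 :=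
  (Ordinal.nat_lt_omega0 n).trans omega0_lt_succ

end UMeas2

namespace UMeas2
open Ordinal UMeas
variable {A : Type u} {U : Ultrafilter A}

noncomputable def ltree (T : ClosedUBT A U (Ordinal.omega0 + 1)) : Set (List A) :=
  {σ : List A | lseq σ ∈ T.mem ((σ.length : ℕ) : Ordinal.{u})}

lemma ltree_isUTree (T : ClosedUBT A U (Ordinal.omega0 + 1)) : IsUTree U (ltree T) := by
  refine ⟨?_, ?_, ?_⟩
  · -- empty list
    show lseq ([] : List A) ∈ T.mem ((0 : ℕ) : Ordinal.{u})
    rw [T.nonsucc _ (natCast_lt_omega0_succ 0) (by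
      rintro ⟨γ, hγ⟩
      simp only [Nat.cast_zero] at hγ
      exact (Ordinal.succ_ne_zero γ) (by rw [← Ordinal.add_one_eq_succ, ← hγ]))]
    intro γ hγ
    simp only [List.length_nil, Nat.cast_zero] at hγ
    exact absurd hγ (not_lt_of_ge (zero_le (a := γ)))
  · -- prefix closed
    intro σ hσ τ hpre
    have hlen : ((τ.length : ℕ) : Ordinal.{u}) ≤ ((σ.length : ℕ) : Ordinal) := by
      exact_mod_cast hpre.length_le
    have h := T.isTree _ _ (natCast_lt_omega0_succ σ.length) hlen _ hσ
    refine (memCongr T rfl ?_).1 h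
    intro γ hγ hγ'
    obtain ⟨k, rfl⟩ := Ordinal.lt_omega0.1 (hγ.trans (Ordinal.nat_lt_omega0 _))
    have hkτ : k < τ.length := by exact_mod_cast hγ
    have hkσ : k < σ.length := lt_of_lt_of_le hkτ hpre.length_le
    show lseq σ (k : Ordinal) _ = lseq τ (k : Ordinal) _
    rw [lseq_natCast σ k (by exact_mod_cast hkσ) hkσ, lseq_natCast τ k hγ' hkτ]
    simp only [List.get_eq_getElem]
    exact (hpre.getElem hkτ).symm
  · -- branching
    intro σ hσ
    have h1 : ((σ.length : ℕ) : Ordinal.{u}) + 1 < Ordinal.omega0 + 1 := by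
      rw [Ordinal.add_one_eq_succ, Ordinal.add_one_eq_succ, Order.succ_lt_succ_iff]
      exact Ordinal.nat_lt_omega0 _
    have hU := T.succ _ h1 _ hσ
    refine U.toFilter.sets_of_superset hU ?_
    intro a ha
    show lseq (σ ++ [a]) ∈ T.mem _
    refine (memCongr T (β := ((σ.length : ℕ) : Ordinal.{u}) + 1) (by
      push_cast [List.length_append]
      simp) ?_).1 ha
    intro γ hγ hγ'
    obtain ⟨k, rfl⟩ := Ordinal.lt_omega0.1 (hγ'.trans (Ordinal.nat_lt_omega0 _))
    have hklt : k < σ.length + 1 := by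
      have : ((k : ℕ) : Ordinal.{u}) < ((σ.length + 1 : ℕ) : Ordinal) := by
        rw [Nat.cast_add, Nat.cast_one]; exact hγ
      exact_mod_cast this
    have hlen : k < (σ ++ [a]).length := by simpa using hklt
    rw [lseq_natCast (σ ++ [a]) k hγ' hlen]
    by_cases hk : k < σ.length
    · show oext (lseq σ) a _ _ = _
      rw [oext, dif_pos (show ((k : ℕ) : Ordinal.{u}) < (σ.length : Ordinal) by
        exact_mod_cast hk)]
      rw [lseq_natCast σ k _ hk]
      simp only [List.get_eq_getElem]
      exact (List.getElem_append_left hk).symm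
    · have hk' : k = σ.length := by omega
      show oext (lseq σ) a _ _ = _
      rw [oext, dif_neg (show ¬ ((k : ℕ) : Ordinal.{u}) < (σ.length : Ordinal) by
        exact_mod_cast hk)]
      simp only [List.get_eq_getElem]
      exact (List.getElem_concat_length hk' _).symm

lemma mem_omega_of_branch (T : ClosedUBT A U (Ordinal.omega0 + 1)) (t : ℕ → A)
    (ht : t ∈ branches (ltree T)) :
    (fun γ hγ => t (toNat' γ hγ) : OSeq A Ordinal.omega0) ∈ T.mem Ordinal.omega0 := by
  refine (T.nonsucc _ omega0_lt_succ omega0_not_succ _).2 ?_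
  intro γ hγ
  obtain ⟨n, rfl⟩ := Ordinal.lt_omega0.1 hγ
  have h := ht n
  refine (memCongr T (by simp [seg]) ?_).1 h
  intro δ hδ hδ'
  obtain ⟨k, rfl⟩ := Ordinal.lt_omega0.1 (hδ.trans (Ordinal.nat_lt_omega0 _))
  have hk : k < (seg t n).length := by simpa [seg] using hδ
  rw [lseq_natCast _ k hδ hk]
  show _ = t (toNat' ((k : ℕ) : Ordinal.{u}) _)
  rw [toNat'_natCast]
  simp [seg]

end UMeas2

namespace UMeas2
open Ordinal UMeas
variable {A : Type u} {U : Ultrafilter A}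

lemma olist_ofn_eq {n : ℕ} {s s' : OSeq A ((n : ℕ) : Ordinal.{u})}
    (h : ∀ (i : Fin n) h1 h2, s (i : ℕ) h1 = s' (i : ℕ) h2) : olist s = olist s' := by
  refine congrArg List.ofFn (funext fun i => ?_)
  exact h i _ _

noncomputable def otree (L : Set (List A)) (hL : IsUTree U L) :
    ClosedUBT A U (Ordinal.omega0 + 1) where
  mem β := {s | ∀ n : ℕ, (h : ((n : ℕ) : Ordinal.{u}) ≤ β) → olist (ores s (n : Ordinal) h) ∈ L}
  isTree := by
    intro β γ _ hγ s hs n hn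
    exact hs n (hn.trans hγ)
  succ := by
    intro β hβ s hs
    have hβω : β < Ordinal.omega0 := by
      rw [Ordinal.add_one_eq_succ, Ordinal.add_one_eq_succ, Order.succ_lt_succ_iff] at hβ
      exact hβ
    obtain ⟨k, rfl⟩ := Ordinal.lt_omega0.1 hβω
    have hσ : olist (ores s (k : Ordinal) le_rfl) ∈ L := hs k le_rfl
    refine U.toFilter.sets_of_superset (hL.2.2 _ hσ) ?_
    intro a ha
    intro n hn
    have hn' : n ≤ k + 1 := by
      have : ((n : ℕ) : Ordinal.{u}) ≤ ((k + 1 : ℕ) : Ordinal) := by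
        rw [Nat.cast_add, Nat.cast_one]; exact hn
      exact_mod_cast this
    rcases Nat.lt_or_ge n (k + 1) with hlt | hge
    · have hnk : n ≤ k := by omega
      have hnk' : ((n : ℕ) : Ordinal.{u}) ≤ (k : Ordinal) := by exact_mod_cast hnk
      have : olist (ores (oext s a) (n : Ordinal) hn) = olist (ores s (n : Ordinal) hnk') := by
        refine olist_ofn_eq fun i h1 h2 => ?_
        show oext s a (i : ℕ) _ = s (i : ℕ) _
        rw [oext, dif_pos (show ((i : ℕ) : Ordinal.{u}) < (k : Ordinal) by
          exact_mod_cast lt_of_lt_of_le i.2 hnk)]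
      rw [this]
      exact hs n hnk'
    · have hn1 : n = k + 1 := by omega
      subst hn1
      have : olist (ores (oext s a) ((k + 1 : ℕ) : Ordinal) hn) =
          olist (ores s (k : Ordinal) le_rfl) ++ [a] := by
        show List.ofFn _ = _
        rw [List.ofFn_succ']
        rw [List.concat_eq_append]
        congr 1
        · refine congrArg List.ofFn (funext fun i => ?_)
          show oext s a ((i.castSucc : Fin (k+1)) : ℕ) _ = s (i : ℕ) _
          rw [oext]
          simp only [Fin.coe_castSucc]
          rw [dif_pos (show ((i : ℕ) : Ordinal.{u}) < (k : Ordinal) by exact_mod_cast i.2)]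
        · show [oext s a ((Fin.last k : Fin (k+1)) : ℕ) _] = [a]
          rw [oext]
          simp only [Fin.val_last]
          rw [dif_neg (show ¬ ((k : ℕ) : Ordinal.{u}) < (k : Ordinal) from lt_irrefl _)]
      rw [this]
      exact ha
  nonsucc := by
    intro β _ hns s
    constructor
    · intro hs γ hγ n hn
      exact hs n (hn.trans hγ.le)
    · intro H n hn
      rcases lt_or_eq_of_le hn with hlt | heq
      · exact H (n : Ordinal) hlt n le_rfl
      · cases n with
        | zero =>
          have : olist (ores s ((0 : ℕ) : Ordinal) hn) = ([] : List A) := by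
            simp [olist]
          rw [this]; exact hL.1
        | succ m =>
          exact absurd ⟨(m : Ordinal), by rw [← heq, Nat.cast_add, Nat.cast_one]⟩ hns

lemma branch_of_mem_omega (L : Set (List A)) (hL : IsUTree U L)
    (s : OSeq A Ordinal.omega0) (hs : s ∈ (otree L hL).mem Ordinal.omega0) :
    (fun n : ℕ => s ((n : ℕ) : Ordinal) (Ordinal.nat_lt_omega0 n)) ∈ branches L := by
  intro n
  exact hs n (Ordinal.nat_lt_omega0 n).le

end UMeas2

theorem stmt13 {A : Type u} (U : Ultrafilter A) (l m : Cardinal.{u}) :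
    UMeas.LMARegular U l m Ordinal.omega0 ↔
      ∃ X : (Cardinal.ord l).ToType → Set (ℕ → A),
        (∀ β, UMeas.ULarge U (X β)) ∧
        ∀ S : Set (Cardinal.ord l).ToType, Cardinal.mk ↥S = m → ⋂ β ∈ S, X β = ∅ := by
  constructor
  · rintro ⟨T, hT⟩
    refine ⟨fun β => UMeas.branches (UMeas2.ltree (T β)), ?_, ?_⟩
    · intro β
      exact ⟨UMeas2.ltree (T β), UMeas2.ltree_isUTree (T β), fun t ht => ht⟩
    · intro S hS
      by_contra hne
      obtain ⟨t, ht⟩ := Set.nonempty_iff_ne_empty.2 hne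
      rw [Set.mem_iInter₂] at ht
      exact hT S hS ⟨fun γ hγ => t (UMeas2.toNat' γ hγ),
        fun β hβ => UMeas2.mem_omega_of_branch (T β) t (ht β hβ)⟩
  · rintro ⟨X, hXl, hXi⟩
    choose L hL hLX using hXl
    refine ⟨fun β => UMeas2.otree (L β) (hL β), ?_⟩
    rintro S hS ⟨s, hs⟩
    have ht : (fun n : ℕ => s ((n : ℕ) : Ordinal) (Ordinal.nat_lt_omega0 n)) ∈ ⋂ β ∈ S, X β :=
      Set.mem_iInter₂.2 fun β hβ =>
        hLX β (UMeas2.branch_of_mem_omega (L β) (hL β) s (hs β hβ))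
    rw [hXi S hS] at ht
    exact ht
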